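/- arXiv:2009.14726 — 4 statements merged into one kernel-verified Lean document; each statement's English description precedes it below -/
import Mathlib

section
/- Consider the directed mixed-integer reformulation constraints for a pipe with y ∈ {0,1}, f ∈ [f_lo, f_hi] (f_lo ≤ 0 ≤ f_hi), π_i ∈ [π_i^lo, π_i^hi], π_j ∈ [π_j^lo, π_j^hi], and w > 0: (a) π_i - π_j ≥ w·f² - (1-y)[w·f_lo² - (π_i^lo - π_j^hi)], (b) π_i - π_j ≤ w·f², (c) π_j - π_i ≥ w·f² - y[w·f_hi² - (π_j^lo - π_i^hi)], (d) π_j - π_i ≤ w·f², together with (1-y)f_lo ≤ f ≤ y·f_hi. Then any feasible point satisfies π_i - π_j = w·f·|f|. -/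
/-- Exactness of the MINQP big-M reformulation of the Weymouth equation. -/
theorem stmt_11 (w f f_lo f_hi y π_i π_j πil πih πjl πjh : ℝ)
    (hw : 0 < w) (hy : y = 0 ∨ y = 1)
    (hflo : f_lo ≤ 0) (hfhi : 0 ≤ f_hi)
    (hπi : πil ≤ π_i) (hπi' : π_i ≤ πih) (hπj : πjl ≤ π_j) (hπj' : π_j ≤ πjh)
    (hM1 : πil - πjh ≤ w * f_lo ^ 2) (hM2 : πjl - πih ≤ w * f_hi ^ 2)
    (ha : π_i - π_j ≥ w * f ^ 2 - (1 - y) * (w * f_lo ^ 2 - (πil - πjh)))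
    (hb : π_i - π_j ≤ w * f ^ 2)
    (hc : π_j - π_i ≥ w * f ^ 2 - y * (w * f_hi ^ 2 - (πjl - πih)))
    (hd : π_j - π_i ≤ w * f ^ 2)
    (hdir1 : (1 - y) * f_lo ≤ f) (hdir2 : f ≤ y * f_hi) :
    π_i - π_j = w * f * |f| := by
  rcases hy with rfl | rfl
  · have hf : f ≤ 0 := by linarith [hdir2]
    rw [abs_of_nonpos hf]
    nlinarith [hc, hd]
  · have hf : 0 ≤ f := by linarith [hdir1]
    rw [abs_of_nonneg hf]
    nlinarith [ha, hb]
end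

section
/- Suppose at a junction i with zero supply and zero demand, mass conservation holds: the sum of flows on outgoing arcs minus the sum of flows on incoming arcs equals zero. If the junction has exactly one incoming arc (j,i) and one outgoing arc (i,k), and flow directions y satisfy (1-y)f_lo ≤ f ≤ y·f_hi with f_lo < 0 < f_hi on each arc, and both flows are nonzero, then y_{ji} = y_{ik}. -/
/-- Degree-two direction cut: at a transshipment junction with one incoming and one
outgoing arc, nonzero flows force equal direction variables. -/
theorem stmt_14 (f_ji f_ik y_ji y_ik flo_ji fhi_ji flo_ik fhi_ik : ℝ)
    (hcons : f_ik - f_ji = 0)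
    (hy1 : y_ji = 0 ∨ y_ji = 1) (hy2 : y_ik = 0 ∨ y_ik = 1)
    (hlo1 : flo_ji < 0) (hhi1 : 0 < fhi_ji)
    (hlo2 : flo_ik < 0) (hhi2 : 0 < fhi_ik)
    (hd1 : (1 - y_ji) * flo_ji ≤ f_ji) (hd1' : f_ji ≤ y_ji * fhi_ji)
    (hd2 : (1 - y_ik) * flo_ik ≤ f_ik) (hd2' : f_ik ≤ y_ik * fhi_ik)
    (hnz1 : f_ji ≠ 0) (hnz2 : f_ik ≠ 0) :
    y_ji = y_ik := by
  rcases hy1 with h1 | h1 <;> rcases hy2 with h2 | h2 <;> subst h1 h2 <;> simp_all <;> rcases lt_or_gt_of_ne hnz1 with h | h <;> linarith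
end

section
/- Suppose at a junction i with zero supply and zero demand, mass conservation holds, and i has exactly two incident arcs, both incoming: (j,i) and (k,i), with direction variables constrained by (1-y)f_lo ≤ f ≤ y·f_hi, f_lo < 0 < f_hi. If both flows are nonzero, then exactly one of y_{ji}, y_{ki} equals 1, i.e., y_{ji} + y_{ki} = 1. -/
/-- Degree-two direction cut, both-incoming case: conservation with nonzero flows
forces the two binary direction variables to sum to one. -/
theorem stmt_15 (f_ji f_ki y_ji y_ki flo_ji fhi_ji flo_ki fhi_ki : ℝ)
    (hcons : f_ji + f_ki = 0)
    (hy1 : y_ji = 0 ∨ y_ji = 1) (hy2 : y_ki = 0 ∨ y_ki = 1)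
    (hlo1 : flo_ji < 0) (hhi1 : 0 < fhi_ji)
    (hlo2 : flo_ki < 0) (hhi2 : 0 < fhi_ki)
    (hd1 : (1 - y_ji) * flo_ji ≤ f_ji) (hd1' : f_ji ≤ y_ji * fhi_ji)
    (hd2 : (1 - y_ki) * flo_ki ≤ f_ki) (hd2' : f_ki ≤ y_ki * fhi_ki)
    (hnz1 : f_ji ≠ 0) (hnz2 : f_ki ≠ 0) :
    y_ji + y_ki = 1 := by
  rcases hy1 with h1 | h1 <;> rcases hy2 with h2 | h2 <;> subst h1 h2 <;> simp_all <;> exact hnz1 (le_antisymm (by linarith) (by linarith))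
end

section
/- Let g : [0, F] → ℝ be g(f) = w·f·|f| = w·f² (with w > 0), and let C = {(f, ℓ) : w·f² ≤ ℓ ≤ w·F·f, 0 ≤ f ≤ F}. Then C is convex, C contains the graph of g on [0, F], and C equals the convex hull of the graph {(f, w·f²) : f ∈ [0, F]}. -/
/-- The region between the parabola `ℓ = w·f²` and its chord on `[0, F]` is convex,
contains the graph of `f ↦ w·f²`, and equals the convex hull of that graph. -/
theorem stmt_19 (w F : ℝ) (hw : 0 < w) (hF : 0 < F) :
    Convex ℝ {q : ℝ × ℝ | 0 ≤ q.1 ∧ q.1 ≤ F ∧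
      w * q.1 ^ 2 ≤ q.2 ∧ q.2 ≤ w * F * q.1} ∧
    ({q : ℝ × ℝ | ∃ f ∈ Set.Icc 0 F, q = (f, w * f ^ 2)} ⊆
      {q : ℝ × ℝ | 0 ≤ q.1 ∧ q.1 ≤ F ∧ w * q.1 ^ 2 ≤ q.2 ∧ q.2 ≤ w * F * q.1}) ∧
    {q : ℝ × ℝ | 0 ≤ q.1 ∧ q.1 ≤ F ∧ w * q.1 ^ 2 ≤ q.2 ∧ q.2 ≤ w * F * q.1} =
      convexHull ℝ {q : ℝ × ℝ | ∃ f ∈ Set.Icc 0 F, q = (f, w * f ^ 2)} := by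
  set G : Set (ℝ × ℝ) := {q : ℝ × ℝ | ∃ f ∈ Set.Icc 0 F, q = (f, w * f ^ 2)} with hG
  set C : Set (ℝ × ℝ) := {q : ℝ × ℝ | 0 ≤ q.1 ∧ q.1 ≤ F ∧
      w * q.1 ^ 2 ≤ q.2 ∧ q.2 ≤ w * F * q.1} with hC
  have hconv : Convex ℝ C := by
    rintro ⟨x1, x2⟩ ⟨hx0, hxF, hxl, hxu⟩ ⟨y1, y2⟩ ⟨hy0, hyF, hyl, hyu⟩ a b ha hb hab
    simp only [hC, Set.mem_setOf_eq, Prod.smul_mk, Prod.mk_add_mk, smul_eq_mul] at *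
    refine ⟨by positivity, by nlinarith, ?_, by nlinarith⟩
    have hb' : b = 1 - a := by linarith
    subst hb'
    have key : w * (a * x1 + (1 - a) * y1) ^ 2 ≤ a * (w * x1 ^ 2) + (1 - a) * (w * y1 ^ 2) := by
      have h1 : a * (w * x1 ^ 2) + (1 - a) * (w * y1 ^ 2) - w * (a * x1 + (1 - a) * y1) ^ 2
          = w * (a * (1 - a)) * (x1 - y1) ^ 2 := by ring
      nlinarith [mul_nonneg (mul_nonneg hw.le (mul_nonneg ha hb)) (sq_nonneg (x1 - y1))]
    nlinarith [mul_le_mul_of_nonneg_left hxl ha, mul_le_mul_of_nonneg_left hyl hb]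
  have hsub : G ⊆ C := by
    rintro ⟨q1, q2⟩ ⟨f, ⟨hf0, hfF⟩, hq⟩
    obtain ⟨rfl, rfl⟩ := Prod.mk.injEq .. ▸ hq
    refine ⟨hf0, hfF, le_refl _, ?_⟩
    simp only
    nlinarith [mul_nonneg (mul_nonneg hw.le hf0) (sub_nonneg.mpr hfF)]
  refine ⟨hconv, hsub, le_antisymm ?_ (convexHull_min hsub hconv)⟩
  rintro ⟨f, l⟩ ⟨hf0, hfF, hl, hu⟩
  simp only at hf0 hfF hl hu
  have hmemG : (f, w * f ^ 2) ∈ convexHull ℝ G :=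
    subset_convexHull ℝ G ⟨f, ⟨hf0, hfF⟩, rfl⟩
  have h0 : ((0 : ℝ), (0 : ℝ)) ∈ convexHull ℝ G :=
    subset_convexHull ℝ G ⟨0, ⟨le_refl _, hF.le⟩, by norm_num⟩
  have hFmem : ((F : ℝ), w * F ^ 2) ∈ convexHull ℝ G :=
    subset_convexHull ℝ G ⟨F, ⟨hF.le, le_refl _⟩, rfl⟩
  have hchord : ((f : ℝ), w * F * f) ∈ convexHull ℝ G := by
    apply (convex_convexHull ℝ G).segment_subset h0 hFmem
    refine ⟨1 - f / F, f / F, by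
        have : f / F ≤ 1 := (div_le_one hF).mpr hfF
        linarith, by positivity, by ring, ?_⟩
    have hFne : F ≠ 0 := hF.ne'
    simp only [Prod.smul_mk, Prod.mk_add_mk, smul_eq_mul, Prod.mk.injEq]
    constructor
    · field_simp; ring
    · field_simp; ring
  apply (convex_convexHull ℝ G).segment_subset hmemG hchord
  rcases eq_or_lt_of_le hl with hle | hlt
  · exact ⟨1, 0, zero_le_one, le_refl _, by ring, by simp [← hle]⟩
  · have hden : 0 < w * F * f - w * f ^ 2 := by linarith
    set t : ℝ := (l - w * f ^ 2) / (w * F * f - w * f ^ 2) with ht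
    have ht0 : 0 ≤ t := div_nonneg (by linarith) hden.le
    have ht1 : t ≤ 1 := by rw [ht, div_le_one hden]; linarith
    refine ⟨1 - t, t, by linarith, ht0, by ring, ?_⟩
    simp only [Prod.smul_mk, Prod.mk_add_mk, smul_eq_mul, Prod.mk.injEq]
    constructor
    · ring
    · rw [ht]; linear_combination (div_mul_cancel₀ (l - w * f ^ 2) hden.ne')
end
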